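/- For integers a, b with a ≠ 0, b < 0, and a² − 4b > 0, the minimum of d(x₁, x₂) = a²(x₁² + x₂²) − 2b(x₁ − x₂)² over nonzero (x₁, x₂) ∈ ℤ² equals a² − 2b if and only if a² ≥ −2b. -/
import Mathlib


theorem stmt_5 (a b : ℤ) (ha : a ≠ 0) (hb : b < 0) (hdisc : a ^ 2 - 4 * b > 0) :
    IsLeast {v : ℤ | ∃ x₁ x₂ : ℤ, ¬(x₁ = 0 ∧ x₂ = 0) ∧
        v = a ^ 2 * (x₁ ^ 2 + x₂ ^ 2) - 2 * b * (x₁ - x₂) ^ 2} (a ^ 2 - 2 * b) ↔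
      a ^ 2 ≥ -2 * b := by
  constructor
  · intro h
    have hmem : (a ^ 2 * ((1:ℤ) ^ 2 + 1 ^ 2) - 2 * b * (1 - 1) ^ 2) ∈
        {v : ℤ | ∃ x₁ x₂ : ℤ, ¬(x₁ = 0 ∧ x₂ = 0) ∧
        v = a ^ 2 * (x₁ ^ 2 + x₂ ^ 2) - 2 * b * (x₁ - x₂) ^ 2} :=
      ⟨1, 1, by norm_num, rfl⟩
    have := h.2 hmem
    linarith
  · intro h
    constructor
    · exact ⟨1, 0, by norm_num, by ring⟩
    · rintro v ⟨x₁, x₂, hx, rfl⟩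
      by_cases heq : x₁ = x₂
      · subst heq
        have hx1 : x₁ ≠ 0 := fun h' => hx ⟨h', h'⟩
        have h1 : 0 < x₁ ^ 2 := by positivity
        nlinarith [h1, h]
      · have h1 : 0 < (x₁ - x₂) ^ 2 := by
          have : x₁ - x₂ ≠ 0 := sub_ne_zero.mpr heq
          positivity
        have ha2 : 0 < a ^ 2 := by positivity
        have h2 : 0 < x₁ ^ 2 + x₂ ^ 2 := by
          rcases eq_or_ne x₁ 0 with h0 | h0
          · have : x₂ ≠ 0 := fun h' => hx ⟨h0, h'⟩
            positivity
          · positivity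
        nlinarith [h1, h2, ha2, hb]
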